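/- Set D*_X = Σ_{n≥1} X^n δ_n. For any w ∈ Ĥ¹ it holds that D*_X(w) = φ(X) *_q w − φ(X)·w in Ĥ¹[[X]], where φ(X) = (log(1 + aX))·b = Σ_{n≥1} ((−1)^{n−1}/n) a^n b X^n. -/

import Mathlib

noncomputable section

/-- The coefficient ring `𝒞 = ℚ[ℏ, ℏ⁻¹]`, realized as Laurent polynomials over `ℚ`. -/
abbrev CC : Type := LaurentPolynomial ℚ

/-- The variable `ℏ ∈ 𝒞`. -/
def hb : CC := LaurentPolynomial.T 1

/-- Embedding of rational constants into `𝒞`. -/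
def qs (x : ℚ) : CC := algebraMap ℚ CC x

/-- The non-commutative polynomial ring `H = 𝒞⟨a, b⟩`. -/
abbrev H : Type := FreeAlgebra CC (Fin 2)

/-- The generator `a`. -/
def av : H := FreeAlgebra.ι CC 0

/-- The generator `b`. -/
def bv : H := FreeAlgebra.ι CC 1

/-- `e k` for `k : ℕ`:  `e 0 = e_{1̄} = ab`, and `e (k+1) = e_{k+1} = a^k (a+ℏ) b`. -/
def ev : ℕ → H
  | 0 => av * bv
  | (k+1) => av ^ k * (av + algebraMap CC H hb) * bv

/-- The monomial `e_{k_1} ⋯ e_{k_r}` attached to an index (a list over `N̂`,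
with `0` encoding `1̄` and `k+1` encoding the positive integer `k+1`). -/
def eword (l : List ℕ) : H := (l.map ev).prod

/-- `Ĥ¹`, as the `𝒞`-span of all monomials `e_k` (this coincides with the subalgebra
freely generated by the `e_k`). -/
def H1 : Submodule CC H := Submodule.span CC {x : H | ∃ l : List ℕ, x = eword l}

/-- `Ĥ⁰`, the `𝒞`-span of monomials `e_k` with `k ∈ Î₀` (first entry `≠ 1`). -/
def H0 : Submodule CC H := Submodule.span CC
  {x : H | ∃ l : List ℕ, l.head? ≠ some 1 ∧ x = eword l}

/-- The circle product `∘_q` on the generators. -/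
def circ : ℕ → ℕ → H
  | 0, 0 => ev 2 - hb • ev 0
  | 0, (l+1) => ev (l+2)
  | (k+1), 0 => ev (k+2)
  | (k+1), (l+1) => ev (k+l+2) + hb • ev (k+l+1)

/-- The defining properties of the shuffle product `⧢_q` on `H`. -/
def IsShuffle (sh : H →ₗ[CC] H →ₗ[CC] H) : Prop :=
  (∀ w : H, sh 1 w = w) ∧ (∀ w : H, sh w 1 = w) ∧
  (∀ w w' : H, sh (av * w) (av * w') =
      av * (sh (av * w) w' + sh w (av * w') + hb • sh w w')) ∧
  (∀ w w' : H, sh (bv * w) w' = bv * sh w w') ∧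
  (∀ w w' : H, sh w (bv * w') = bv * sh w w')

/-- The defining properties of the stuffle product `*_q` on `Ĥ¹`. -/
def IsStuffle (st : H →ₗ[CC] H →ₗ[CC] H) : Prop :=
  (∀ w : H, st 1 w = w) ∧ (∀ w : H, st w 1 = w) ∧
  (∀ k l : ℕ, ∀ w w' : H, w ∈ H1 → w' ∈ H1 →
    st (ev k * w) (ev l * w') =
      ev k * st w (ev l * w') + ev l * st (ev k * w) w' + circ k l * st w w')

/-- The q-integer `[m] = (1-q^m)/(1-q)`. -/
def qint (q : ℂ) (m : ℕ) : ℂ := (1 - q ^ m) / (1 - q)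

/-- `F_k(m)`:  `F 0 = F_{1̄}` and `F (k+1) = F_{k+1}`. -/
def Fq (q : ℂ) : ℕ → ℕ → ℂ
  | 0, m => q ^ m / qint q m
  | (k+1), m => q ^ (k * m) / (qint q m) ^ (k + 1)

/-- `ζ_q(k)` for an index `k` (a list over `N̂`): the sum over `m_1 > ⋯ > m_r ≥ 1`. -/
def zetaq (q : ℂ) (l : List ℕ) : ℂ :=
  ∑' m : {f : Fin l.length → ℕ // StrictAnti f ∧ ∀ i, 0 < f i},
    ∏ i : Fin l.length, Fq q (l.get i) (m.1 i)

/-- The defining properties of the `𝒞`-linear map `Z_q` (as a map on all of `H`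
extending the one on `Ĥ⁰`): additive, `𝒞`-semilinear along `ρ`, sending `e_k ↦ ζ_q(k)`
for `k ∈ Î₀`. -/
def IsZq (ρ : CC →ₐ[ℚ] ℂ) (q : ℂ) (Z : H →+ ℂ) : Prop :=
  (∀ c : CC, ∀ w : H, Z (c • w) = ρ c * Z w) ∧
  (∀ l : List ℕ, l.head? ≠ some 1 → Z (eword l) = zetaq q l)


/-- The `𝒞[[X]]`-bilinear extension to `H[[X]]` of a `𝒞`-bilinear product `m` on `H`. -/
def extMul (m : H →ₗ[CC] H →ₗ[CC] H) (f g : PowerSeries H) : PowerSeries H :=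
  PowerSeries.mk fun N =>
    ∑ p ∈ Finset.HasAntidiagonal.antidiagonal N, m (PowerSeries.coeff (R := H) p.1 f) (PowerSeries.coeff (R := H) p.2 g)

/-- `n`-fold power with respect to the product `extMul m`, with `f^1 = f`. -/
def itpow (m : H →ₗ[CC] H →ₗ[CC] H) (f : PowerSeries H) : ℕ → PowerSeries H
  | 0 => 1
  | 1 => f
  | (n+2) => extMul m f (itpow m f (n+1))

/-- `log_m (1 + f) = Σ_{n≥1} ((−1)^{n−1}/n) f^{m n}`, defined coefficientwise (for
`f ∈ X·H[[X]]` the sum over `n` contributing to the `N`-th coefficient is finite,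
namely `1 ≤ n ≤ N`). -/
def serlog (m : H →ₗ[CC] H →ₗ[CC] H) (f : PowerSeries H) : PowerSeries H :=
  PowerSeries.mk fun N =>
    ∑ n ∈ Finset.Icc 1 N, qs ((-1 : ℚ) ^ (n - 1) / (n : ℚ)) • PowerSeries.coeff (R := H) N (itpow m f n)

/-- The geometric series `1/(1 − e_{1̄}X) = Σ_{n≥0} e_{1̄}^n X^n`. -/
def geom : PowerSeries H := PowerSeries.mk fun n => (av * bv) ^ n

/-- The series `e_{1̄} X`. -/
def e1X : PowerSeries H := PowerSeries.mk fun n => if n = 1 then av * bv else 0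

/-- `ψ(X) = (1/ℏ)·a·log(1 + ℏbX) = Σ_{n≥1} ((−1)^{n−1}/n) ℏ^{n−1} a b^n X^n`. -/
def psiS : PowerSeries H := PowerSeries.mk fun n =>
  if n = 0 then 0 else (qs ((-1 : ℚ) ^ (n - 1) / (n : ℚ)) * hb ^ (n - 1)) • (av * bv ^ n)

/-- `φ(X) = (log(1 + aX))·b = Σ_{n≥1} ((−1)^{n−1}/n) a^n b X^n`. -/
def phiS : PowerSeries H := PowerSeries.mk fun n =>
  if n = 0 then 0 else qs ((-1 : ℚ) ^ (n - 1) / (n : ℚ)) • (av ^ n * bv)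

/-- `log(1 + ℏbX) = Σ_{n≥1} ((−1)^{n−1}/n) ℏ^n b^n X^n`. -/
def lgS : PowerSeries H := PowerSeries.mk fun n =>
  if n = 0 then 0 else (qs ((-1 : ℚ) ^ (n - 1) / (n : ℚ)) * hb ^ n) • (bv ^ n)


/-- The defining properties of the family of `𝒞`-linear derivations `δ_n` (`n ≥ 1`)
on `H`: `δ_n(a) = 0`, `δ_n(b) = ((−1)^{n−1}/n)(b+1)a^n b`. -/
def IsDelta (δ : ℕ → H →ₗ[CC] H) : Prop :=
  ∀ n : ℕ, 1 ≤ n →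
    (∀ u v : H, δ n (u * v) = δ n u * v + u * δ n v) ∧
    δ n av = 0 ∧
    δ n bv = qs ((-1 : ℚ) ^ (n - 1) / (n : ℚ)) • ((bv + 1) * av ^ n * bv)

-- auxiliary lemmas (to be inserted above the theorem)

lemma hmul (x y : H) : x * algebraMap CC H hb * y = hb • (x * y) := by
  rw [← Algebra.commutes hb x, Algebra.smul_def, mul_assoc]

/-- `circn n k` encodes `(aⁿb) ∘ e_k`. -/
def circn : ℕ → ℕ → H
  | n, 0 => av ^ (n+1) * bv
  | n, (k+1) => av ^ (n+k) * (av + algebraMap CC H hb) * bv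

lemma An_succ (n : ℕ) : av ^ (n+1) * bv = ev (n+1) - hb • (av ^ n * bv) := by
  have h : av ^ n * (av + algebraMap CC H hb) * bv
      = av ^ (n+1) * bv + hb • (av ^ n * bv) := by
    rw [mul_add, add_mul, ← pow_succ, hmul]
  simp [ev, h]

lemma circ1 (k : ℕ) : circ 0 k = circn 1 k := by
  cases k with
  | zero =>
    rw [show circ 0 0 = ev 2 - hb • ev 0 from rfl,
        show (ev 0 : H) = av ^ 1 * bv by simp [ev],
        ← An_succ 1]
    rfl
  | succ m => simp [circ, circn, ev, add_comm]

lemma circ_rec (n k : ℕ) : circ (n+1) k - hb • circn n k = circn (n+1) k := by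
  cases k with
  | zero =>
    rw [show circ (n+1) 0 = ev (n+2) from rfl,
        show circn n 0 = av ^ (n+1) * bv from rfl,
        show circn (n+1) 0 = av ^ (n+1+1) * bv from rfl, An_succ (n+1)]
  | succ m =>
    rw [show circ (n+1) (m+1) = ev (n+m+2) + hb • ev (n+m+1) from rfl,
        show circn n (m+1) = ev (n+m+1) from rfl,
        show circn (n+1) (m+1) = ev (n+m+2) by simp [circn, ev, show n+1+m = n+m+1 by omega]]
    exact add_sub_cancel_right _ _

lemma one_mem_H1 : (1 : H) ∈ H1 := Submodule.subset_span ⟨[], rfl⟩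

lemma eword_mem_H1 (l : List ℕ) : eword l ∈ H1 := Submodule.subset_span ⟨l, rfl⟩

lemma key (st : H →ₗ[CC] H →ₗ[CC] H) (hst : IsStuffle st) :
    ∀ n : ℕ, 1 ≤ n → ∀ k : ℕ, ∀ w' : H, w' ∈ H1 →
    st (av ^ n * bv) (ev k * w')
      = av ^ n * bv * (ev k * w') + ev k * st (av ^ n * bv) w' + circn n k * w' := by
  intro n hn
  induction n, hn using Nat.le_induction with
  | base =>
    intro k w' hw'
    have h := hst.2.2 0 k 1 w' one_mem_H1 hw'
    rw [mul_one] at h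
    rw [show (av ^ 1 * bv : H) = ev 0 by simp [ev]]
    rw [h, hst.1, hst.1, circ1]
  | succ n hn ih =>
    intro k w' hw'
    have h1 := hst.2.2 (n+1) k 1 w' one_mem_H1 hw'
    rw [mul_one, hst.1, hst.1] at h1
    rw [An_succ n, map_sub, map_smul, LinearMap.sub_apply, LinearMap.smul_apply,
        LinearMap.sub_apply, LinearMap.smul_apply, h1, ih k w' hw', ← circ_rec n k]
    simp only [sub_mul, smul_mul_assoc, mul_sub, mul_smul_comm, smul_add]
    abel

lemma delta_one (δ : ℕ → H →ₗ[CC] H) (hδ : IsDelta δ) (n : ℕ) (hn : 1 ≤ n) :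
    δ n 1 = 0 := by
  have h := (hδ n hn).1 1 1
  simp only [one_mul, mul_one] at h
  exact (left_eq_add.mp h)

lemma delta_pow (δ : ℕ → H →ₗ[CC] H) (hδ : IsDelta δ) (n : ℕ) (hn : 1 ≤ n) :
    ∀ m : ℕ, δ n (av ^ m) = 0 := by
  intro m
  induction m with
  | zero => simpa using delta_one δ hδ n hn
  | succ m ih =>
    rw [pow_succ, (hδ n hn).1, ih, (hδ n hn).2.1, zero_mul, mul_zero, add_zero]

lemma delta_alg (δ : ℕ → H →ₗ[CC] H) (hδ : IsDelta δ) (n : ℕ) (hn : 1 ≤ n) (c : CC) :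
    δ n (algebraMap CC H c) = 0 := by
  rw [Algebra.algebraMap_eq_smul_one, map_smul, delta_one δ hδ n hn, smul_zero]

lemma delta_ev (δ : ℕ → H →ₗ[CC] H) (hδ : IsDelta δ) (n : ℕ) (hn : 1 ≤ n) (k : ℕ) :
    δ n (ev k) = qs ((-1 : ℚ) ^ (n - 1) / (n : ℚ)) •
      (ev k * (av ^ n * bv) + circn n k) := by
  obtain ⟨hder, ha, hbv⟩ := hδ n hn
  cases k with
  | zero =>
    rw [show (ev 0 : H) = av * bv from rfl, hder, ha, zero_mul, zero_add, hbv,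
        mul_smul_comm]
    congr 1
    rw [show circn n 0 = av ^ (n+1) * bv from rfl]
    have h1 : av * ((bv + 1) * av ^ n * bv)
        = av * bv * (av ^ n * bv) + av * av ^ n * bv := by noncomm_ring
    rw [h1, ← pow_succ']
  | succ m =>
    have h0 : δ n (av ^ m * (av + algebraMap CC H hb)) = 0 := by
      rw [hder, delta_pow δ hδ n hn, map_add, ha, delta_alg δ hδ n hn,
          zero_mul, add_zero, mul_zero, add_zero]
    rw [show (ev (m+1) : H) = av ^ m * (av + algebraMap CC H hb) * bv from rfl,
        hder, h0, zero_mul, zero_add, hbv, mul_smul_comm]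
    congr 1
    have hc : (av + algebraMap CC H hb) * av ^ n = av ^ n * (av + algebraMap CC H hb) := by
      rw [add_mul, mul_add, ← pow_succ, ← pow_succ', Algebra.commutes]
    rw [show circn n (m+1) = av ^ (n+m) * (av + algebraMap CC H hb) * bv from rfl]
    have expand : av ^ m * (av + algebraMap CC H hb) * ((bv + 1) * av ^ n * bv)
        = av ^ m * (av + algebraMap CC H hb) * bv * (av ^ n * bv)
          + av ^ m * ((av + algebraMap CC H hb) * av ^ n) * bv := by
      noncomm_ring
    have h2 : av ^ m * (av ^ n * (av + algebraMap CC H hb))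
        = av ^ (n+m) * (av + algebraMap CC H hb) := by
      rw [← mul_assoc, ← pow_add, Nat.add_comm m n]
    rw [expand, hc, h2]

lemma main_word (δ : ℕ → H →ₗ[CC] H) (hδ : IsDelta δ)
    (st : H →ₗ[CC] H →ₗ[CC] H) (hst : IsStuffle st)
    (n : ℕ) (hn : 1 ≤ n) :
    ∀ l : List ℕ, δ n (eword l)
      = qs ((-1 : ℚ) ^ (n - 1) / (n : ℚ)) •
          (st (av ^ n * bv) (eword l) - av ^ n * bv * eword l) := by
  intro l
  induction l with
  | nil =>
    rw [show eword [] = (1 : H) from rfl, delta_one δ hδ n hn, hst.2.1, mul_one,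
        sub_self, smul_zero]
  | cons k l ih =>
    rw [show eword (k :: l) = ev k * eword l from by simp [eword]]
    rw [(hδ n hn).1, delta_ev δ hδ n hn, ih,
        key st hst n hn k (eword l) (eword_mem_H1 l),
        smul_mul_assoc, mul_smul_comm, ← smul_add]
    congr 1
    simp only [add_mul, mul_sub, mul_assoc]
    abel

lemma main (δ : ℕ → H →ₗ[CC] H) (hδ : IsDelta δ)
    (st : H →ₗ[CC] H →ₗ[CC] H) (hst : IsStuffle st)
    (n : ℕ) (hn : 1 ≤ n) (w : H) (hw : w ∈ H1) :
    δ n w = qs ((-1 : ℚ) ^ (n - 1) / (n : ℚ)) •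
      (st (av ^ n * bv) w - av ^ n * bv * w) := by
  induction hw using Submodule.span_induction with
  | mem x hx =>
    obtain ⟨l, rfl⟩ := hx
    exact main_word δ hδ st hst n hn l
  | zero => simp
  | add x y hx hy ihx ihy =>
    rw [map_add, map_add, mul_add, ihx, ihy, ← smul_add]
    congr 1
    abel
  | smul r x hx ihx =>
    rw [map_smul, map_smul, mul_smul_comm, ihx, smul_comm r, smul_sub]

/-- For `w ∈ Ĥ¹`,
`D*_X(w) = Σ_{n≥1} X^n δ_n(w) = φ(X) *_q w − φ(X)·w` in `Ĥ¹[[X]]`. -/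
theorem Dstar_eq (δ : ℕ → H →ₗ[CC] H) (hδ : IsDelta δ)
    (st : H →ₗ[CC] H →ₗ[CC] H) (hst : IsStuffle st)
    (w : H) (hw : w ∈ H1) :
    (PowerSeries.mk fun n => if n = 0 then 0 else δ n w)
      = extMul st phiS ((PowerSeries.C (R := H)) w) - phiS * (PowerSeries.C (R := H)) w := by
  ext N
  rw [PowerSeries.coeff_mk, map_sub]
  have hsum : (PowerSeries.coeff (R := H) N) (extMul st phiS ((PowerSeries.C (R := H)) w))
      = st ((PowerSeries.coeff (R := H) N) phiS) w := by
    rw [extMul, PowerSeries.coeff_mk, Finset.sum_eq_single (N, 0)]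
    · simp [PowerSeries.coeff_C]
    · rintro ⟨p1, p2⟩ hp hne
      have hp' := Finset.HasAntidiagonal.mem_antidiagonal.mp hp
      have h2 : p2 ≠ 0 := by
        rintro rfl
        exact hne (by simp at hp' ⊢; omega)
      simp [PowerSeries.coeff_C, h2]
    · intro h; exact absurd (Finset.HasAntidiagonal.mem_antidiagonal.mpr (by simp)) h
  rw [hsum, PowerSeries.coeff_mul_C]
  cases N with
  | zero => simp [phiS]
  | succ M =>
    rw [show PowerSeries.coeff (R := H) (M+1) phiS
        = qs ((-1 : ℚ) ^ (M+1-1) / ((M+1 : ℕ) : ℚ)) • (av ^ (M+1) * bv) by simp [phiS],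
      map_smul, LinearMap.smul_apply, smul_mul_assoc, ← smul_sub,
      if_neg (Nat.succ_ne_zero M)]
    exact main δ hδ st hst (M+1) (Nat.le_add_left 1 M) w hw

end
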